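/- Let F be a finite field of size q, n ≥ 2, d = gcd(n, q−1), and G = PSL_n(F). Then e(G) ≥ min{n, (q−1)/d}, where e(G) is the maximum over g ∈ G of the generalized order e(g). -/

import Mathlib

open Matrix

/-- The generalized order of `g`: the smallest positive `k` such that some product of
`k` conjugates of `g` equals the identity. -/
noncomputable def genOrder {G : Type*} [Group G] (g : G) : ℕ :=
  sInf {k | 0 < k ∧ ∃ l : List G, l.length = k ∧ (l.map fun x => x⁻¹ * g * x).prod = 1}

section Aux

variable {F : Type*} [Field F] {n : ℕ}

lemma matRank_add_le (A B : Matrix (Fin n) (Fin n) F) :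
    (A + B).rank ≤ A.rank + B.rank := by
  have h : LinearMap.range (A + B).mulVecLin ≤
      LinearMap.range A.mulVecLin ⊔ LinearMap.range B.mulVecLin := by
    rw [Matrix.mulVecLin_add]
    rintro x ⟨y, rfl⟩
    exact Submodule.add_mem_sup ⟨y, rfl⟩ ⟨y, rfl⟩
  calc (A + B).rank ≤ Module.finrank F
        (LinearMap.range A.mulVecLin ⊔ LinearMap.range B.mulVecLin : Submodule F (Fin n → F)) :=
        Submodule.finrank_mono h
    _ ≤ A.rank + B.rank := Submodule.finrank_add_le_finrank_add_finrank _ _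

lemma rank_smul_le (c : F) (M : Matrix (Fin n) (Fin n) F) : (c • M).rank ≤ M.rank := by
  have : c • M = (c • (1 : Matrix (Fin n) (Fin n) F)) * M := by
    rw [Matrix.smul_mul, one_mul]
  rw [this]
  exact Matrix.rank_mul_le_right _ _

lemma rank_list_prod_sub (a : F) (l : List (Matrix (Fin n) (Fin n) F))
    (h : ∀ C ∈ l, (C - a • 1).rank ≤ 1) :
    (l.prod - (a ^ l.length) • 1).rank ≤ l.length := by
  induction l with
  | nil => simp
  | cons C t ih =>
    have hC : (C - a • 1).rank ≤ 1 := h C List.mem_cons_self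
    have ht : (t.prod - (a ^ t.length) • 1).rank ≤ t.length :=
      ih fun D hD => h D (List.mem_cons_of_mem _ hD)
    have key : (C :: t).prod - (a ^ (C :: t).length) • 1 =
        (C - a • 1) * t.prod + a • (t.prod - (a ^ t.length) • 1) := by
      rw [List.prod_cons, List.length_cons, sub_mul, Matrix.smul_mul, one_mul,
        smul_sub, smul_smul, ← pow_succ']
      abel
    rw [key]
    calc ((C - a • 1) * t.prod + a • (t.prod - (a ^ t.length) • 1)).rank
        ≤ ((C - a • 1) * t.prod).rank + (a • (t.prod - (a ^ t.length) • 1)).rank :=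
          matRank_add_le _ _
      _ ≤ (C - a • 1).rank + (t.prod - (a ^ t.length) • 1).rank :=
          Nat.add_le_add (Matrix.rank_mul_le_left _ _) (rank_smul_le _ _)
      _ ≤ 1 + t.length := Nat.add_le_add hC ht
      _ = (C :: t).length := by simp [Nat.add_comm]

lemma nt_aux (q1 N k : ℕ) (hN : 0 < N) (hk : 0 < k) (h : q1 ∣ k * N) :
    q1 / Nat.gcd N q1 ≤ k := by
  rcases Nat.eq_zero_or_pos q1 with hq | hq
  · simp [hq]
  have hdpos : 0 < Nat.gcd N q1 := Nat.gcd_pos_of_pos_left _ hN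
  have hq' : q1 / Nat.gcd N q1 * Nat.gcd N q1 = q1 :=
    Nat.div_mul_cancel (Nat.gcd_dvd_right _ _)
  have hN' : N / Nat.gcd N q1 * Nat.gcd N q1 = N :=
    Nat.div_mul_cancel (Nat.gcd_dvd_left _ _)
  have h2 : q1 / Nat.gcd N q1 ∣ k * (N / Nat.gcd N q1) := by
    refine (Nat.mul_dvd_mul_iff_right hdpos).mp ?_
    rw [hq', mul_assoc, hN']
    exact h
  have hcop : Nat.Coprime (q1 / Nat.gcd N q1) (N / Nat.gcd N q1) :=
    (Nat.coprime_div_gcd_div_gcd hdpos).symm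
  exact Nat.le_of_dvd hk (hcop.dvd_of_dvd_mul_right h2)

end Aux

theorem stmt14 {F : Type*} [Field F] [Fintype F] (n : ℕ) (hn : 2 ≤ n) :
    ∃ g : Matrix.ProjectiveSpecialLinearGroup (Fin n) F,
      min n ((Fintype.card F - 1) / Nat.gcd n (Fintype.card F - 1)) ≤ genOrder g := by
  classical
  obtain ⟨ζ, hζ⟩ := IsCyclic.exists_generator (α := Fˣ)
  set a : F := (ζ : F) with ha_def
  have ha : a ≠ 0 := ζ.ne_zero
  have hord : orderOf ζ = Fintype.card F - 1 := by
    rw [orderOf_eq_card_of_forall_mem_zpowers hζ, Nat.card_eq_fintype_card, Fintype.card_units]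
  have hnpos : 0 < n := by omega
  set i0 : Fin n := ⟨n - 1, by omega⟩ with hi0
  set w : Fin n → F := fun i => if i = i0 then (a⁻¹) ^ (n - 1) else a with hw
  have hdet : (Matrix.diagonal w).det = 1 := by
    rw [Matrix.det_diagonal, ← Finset.mul_prod_erase Finset.univ w (Finset.mem_univ i0)]
    have h1 : ∀ i ∈ Finset.univ.erase i0, w i = a := by
      intro i hi
      simp only [hw]
      rw [if_neg (Finset.mem_erase.mp hi).1]
    rw [Finset.prod_congr rfl h1, Finset.prod_const,
      Finset.card_erase_of_mem (Finset.mem_univ _), Finset.card_univ, Fintype.card_fin]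
    simp only [hw, if_pos rfl]
    rw [← mul_pow, inv_mul_cancel₀ ha, one_pow]
  set Asl : Matrix.SpecialLinearGroup (Fin n) F := ⟨Matrix.diagonal w, hdet⟩ with hAsl
  refine ⟨QuotientGroup.mk Asl, ?_⟩
  unfold genOrder
  apply le_csInf
  · refine ⟨orderOf (QuotientGroup.mk Asl :
      Matrix.ProjectiveSpecialLinearGroup (Fin n) F), orderOf_pos _,
      List.replicate _ 1, List.length_replicate, ?_⟩
    simp [List.map_replicate, List.prod_replicate, pow_orderOf_eq_one]
  rintro k ⟨hk, l, hlen, hprod⟩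
  -- lift the list to SL
  obtain ⟨l', rfl⟩ : ∃ l' : List (Matrix.SpecialLinearGroup (Fin n) F),
      l'.map QuotientGroup.mk = l := by
    clear hlen hprod
    induction l with
    | nil => exact ⟨[], rfl⟩
    | cons x t ih =>
      obtain ⟨t', ht'⟩ := ih
      obtain ⟨x', hx'⟩ := QuotientGroup.mk_surjective x
      exact ⟨x' :: t', by simp [ht', hx']⟩
  rw [List.length_map] at hlen
  set q := QuotientGroup.mk' (Subgroup.center (Matrix.SpecialLinearGroup (Fin n) F)) with hq
  have hprod' : q ((l'.map fun y => y⁻¹ * Asl * y).prod) = 1 := by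
    rw [map_list_prod, List.map_map]
    rw [List.map_map] at hprod
    convert hprod using 3
    · rfl
    · rfl
  set P : Matrix.SpecialLinearGroup (Fin n) F := (l'.map fun y => y⁻¹ * Asl * y).prod with hP
  have hPc : P ∈ Subgroup.center (Matrix.SpecialLinearGroup (Fin n) F) :=
    (QuotientGroup.eq_one_iff _).mp hprod'
  obtain ⟨ω, hωn, hωP⟩ := Matrix.SpecialLinearGroup.mem_center_iff.mp hPc
  rw [Fintype.card_fin] at hωn
  -- matrix level
  have hPm : (P : Matrix (Fin n) (Fin n) F) = ω • 1 := by
    rw [← hωP, Matrix.scalar_apply, Matrix.smul_one_eq_diagonal]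
  -- coercion of the product
  set coeHom : Matrix.SpecialLinearGroup (Fin n) F →* Matrix (Fin n) (Fin n) F :=
    { toFun := fun x => (x : Matrix (Fin n) (Fin n) F),
      map_one' := Matrix.SpecialLinearGroup.coe_one,
      map_mul' := fun x y => rfl } with hcoe
  have hPm2 : coeHom P = (l'.map fun y =>
      ((y⁻¹ * Asl * y : Matrix.SpecialLinearGroup (Fin n) F) :
        Matrix (Fin n) (Fin n) F)).prod := by
    rw [hP, map_list_prod, List.map_map]
    rfl
  set ml : List (Matrix (Fin n) (Fin n) F) := l'.map fun y =>
      ((y⁻¹ * Asl * y : Matrix.SpecialLinearGroup (Fin n) F) :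
        Matrix (Fin n) (Fin n) F) with hml
  have hmlprod : ml.prod = ω • 1 := by rw [← hPm2]; exact hPm
  have hmllen : ml.length = k := by rw [hml, List.length_map, hlen]
  -- each conjugate is a • 1 plus a rank ≤ 1 matrix
  have hArank : ((Matrix.diagonal w : Matrix (Fin n) (Fin n) F) - a • 1).rank ≤ 1 := by
    rw [Matrix.smul_one_eq_diagonal, Matrix.diagonal_sub, Matrix.rank_diagonal]
    rw [Fintype.card_le_one_iff]
    have key : ∀ i : Fin n, w i - a ≠ 0 → i = i0 := by
      intro i hi
      by_contra hne
      apply hi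
      simp only [hw, if_neg hne, sub_self]
    rintro ⟨i, hi⟩ ⟨j, hj⟩
    exact Subtype.ext ((key i hi).trans (key j hj).symm)
  have hrank1 : ∀ C ∈ ml, (C - a • 1).rank ≤ 1 := by
    rintro C hC
    rw [hml] at hC
    obtain ⟨y, -, rfl⟩ := List.mem_map.mp hC
    have hXY : ((y⁻¹ : Matrix.SpecialLinearGroup (Fin n) F) : Matrix (Fin n) (Fin n) F) *
        (y : Matrix (Fin n) (Fin n) F) = 1 := by
      rw [← Matrix.SpecialLinearGroup.coe_mul, inv_mul_cancel,
        Matrix.SpecialLinearGroup.coe_one]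
    have hsplit : ((y⁻¹ * Asl * y : Matrix.SpecialLinearGroup (Fin n) F) :
        Matrix (Fin n) (Fin n) F) - a • 1 =
        ((y⁻¹ : Matrix.SpecialLinearGroup (Fin n) F) : Matrix (Fin n) (Fin n) F) *
          ((Matrix.diagonal w : Matrix (Fin n) (Fin n) F) - a • 1) *
          (y : Matrix (Fin n) (Fin n) F) := by
      rw [Matrix.mul_sub, Matrix.sub_mul, Matrix.mul_smul, mul_one, Matrix.smul_mul, hXY]
      congr 1
    rw [hsplit]
    calc (((y⁻¹ : Matrix.SpecialLinearGroup (Fin n) F) : Matrix (Fin n) (Fin n) F) *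
          ((Matrix.diagonal w : Matrix (Fin n) (Fin n) F) - a • 1) *
          (y : Matrix (Fin n) (Fin n) F)).rank
        ≤ (((y⁻¹ : Matrix.SpecialLinearGroup (Fin n) F) : Matrix (Fin n) (Fin n) F) *
          ((Matrix.diagonal w : Matrix (Fin n) (Fin n) F) - a • 1)).rank :=
          Matrix.rank_mul_le_left _ _
      _ ≤ ((Matrix.diagonal w : Matrix (Fin n) (Fin n) F) - a • 1).rank :=
          Matrix.rank_mul_le_right _ _
      _ ≤ 1 := hArank
  have hmain : (ml.prod - (a ^ k) • 1).rank ≤ k := by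
    rw [← hmllen]
    exact rank_list_prod_sub a ml hrank1
  rw [hmlprod, ← sub_smul] at hmain
  by_cases hcase : ω = a ^ k
  · -- scalar case: a ^ (k * n) = 1 forces (q-1)/d ∣ k
    have hpow : a ^ (k * n) = 1 := by
      rw [pow_mul, ← hcase, hωn]
    have hζpow : ζ ^ (k * n) = 1 := by
      ext
      rw [Units.val_pow_eq_pow_val, Units.val_one]
      exact hpow
    have hdvd : Fintype.card F - 1 ∣ k * n := by
      rw [← hord]
      exact orderOf_dvd_of_pow_eq_one hζpow
    exact le_trans (min_le_right _ _) (nt_aux _ _ _ hnpos hk hdvd)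
  · -- nonscalar case: the difference has full rank, so n ≤ k
    have hc : ω - a ^ k ≠ 0 := sub_ne_zero.mpr hcase
    have hfull : n ≤ ((ω - a ^ k) • (1 : Matrix (Fin n) (Fin n) F)).rank := by
      have h1 : ((ω - a ^ k)⁻¹ • (1 : Matrix (Fin n) (Fin n) F)) *
          ((ω - a ^ k) • (1 : Matrix (Fin n) (Fin n) F)) = 1 := by
        rw [Matrix.smul_mul, Matrix.mul_smul, one_mul, smul_smul, inv_mul_cancel₀ hc, one_smul]
      have h2 := Matrix.rank_mul_le_right
        ((ω - a ^ k)⁻¹ • (1 : Matrix (Fin n) (Fin n) F))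
        ((ω - a ^ k) • (1 : Matrix (Fin n) (Fin n) F))
      rw [h1, Matrix.rank_one, Fintype.card_fin] at h2
      exact h2
    exact le_trans (min_le_left _ _) (le_trans hfull hmain)
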